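/- arXiv:2605.12390 — 5 statements merged into one kernel-verified Lean document; each statement's English description precedes it below -/
import Mathlib

section
/- There is no integer x with gcd(x, 48) = 1 such that the reflexive modular reduction of x·{1, 2, 23} modulo 48 equals {2, 11, 13}. -/
/-- Reflexive modular reduction of `r` modulo `n`: `min (r mod n, n - r mod n)`. -/
def reflRed (n : ℕ) (r : ℤ) : ℤ := min (r % (n : ℤ)) ((n : ℤ) - r % (n : ℤ))

/-- Reflexive reduction of the set `x • R` modulo `n`. -/
def reflRedSet (n : ℕ) (x : ℤ) (R : Finset ℤ) : Finset ℤ :=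
  R.image (fun r => reflRed n (x * r))

/-- The circulant graph `C_n(S)` on `ZMod n`. -/
def circulant (n : ℕ) (S : Finset ℤ) : SimpleGraph (ZMod n) where
  Adj a b := a ≠ b ∧ ∃ s ∈ S, a - b = (s : ZMod n) ∨ a - b = -(s : ZMod n)
  symm := by
    constructor
    rintro a b ⟨hab, s, hs, h⟩
    refine ⟨hab.symm, s, hs, ?_⟩
    have hba : b - a = -(a - b) := (neg_sub a b).symm
    rcases h with h | h
    · right; rw [hba, h]
    · left; rw [hba, h, neg_neg]
  loopless := by constructor; rintro a ⟨h, -⟩; exact h rfl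

lemma reflRed_mod (n : ℕ) (x r : ℤ) : reflRed n ((x % n) * r) = reflRed n (x * r) := by
  unfold reflRed
  have : (x % n) * r % (n : ℤ) = x * r % (n : ℤ) := by
    rw [Int.mul_emod, Int.emod_emod_of_dvd _ dvd_rfl, ← Int.mul_emod]
  rw [this]

theorem stmt2 :
    ¬ ∃ x : ℤ, Int.gcd x 48 = 1 ∧ reflRedSet 48 x ({1, 2, 23} : Finset ℤ) = {2, 11, 13} := by
  rintro ⟨x, hg, hs⟩
  have hs' : reflRedSet 48 (x % 48) ({1, 2, 23} : Finset ℤ) = {2, 11, 13} := by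
    rw [← hs]; unfold reflRedSet
    apply Finset.image_congr
    intro r _
    exact reflRed_mod 48 x r
  have hg' : Int.gcd (x % 48) 48 = 1 := by
    rw [← Int.isCoprime_iff_gcd_eq_one] at hg ⊢
    have : x % 48 = x + 48 * -(x/48) := by rw [Int.emod_def]; ring
    rw [this]
    exact hg.add_mul_left_left _
  set y := x % 48 with hy
  have h0 : 0 ≤ y := Int.emod_nonneg x (by norm_num)
  have h1 : y < 48 := Int.emod_lt_of_pos x (by norm_num)
  interval_cases y <;> revert hg' hs' <;> decide
end

section
/- Let n, k ≥ 1 and let R, S be finite sets of integers. If the circulant graphs C_n(R) and C_n(S) are isomorphic, then the circulant graphs C_{kn}(kR) and C_{kn}(kS) are isomorphic, where kR = {k·r : r ∈ R}. -/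
private lemma keyArith (n k qa qb ra rb t : ℤ) (hk : 0 < k)
    (hra : 0 ≤ ra) (hra' : ra < k) (hrb : 0 ≤ rb) (hrb' : rb < k) :
    (k*qa + ra) - (k*qb + rb) ≡ k*t [ZMOD (k*n)] ↔ (ra = rb ∧ qa - qb ≡ t [ZMOD n]) := by
  constructor
  · intro h
    obtain ⟨c, hc⟩ := Int.ModEq.dvd h
    have hX : ra - rb = k * (t - qa + qb - n*c) := by linear_combination -hc
    set X := t - qa + qb - n*c with hXdef
    have h1 : X = 0 := by
      by_contra h0
      rcases lt_or_gt_of_ne h0 with h0 | h0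
      · have h2 : k * X ≤ k * (-1) := mul_le_mul_of_nonneg_left (by omega) hk.le
        rw [mul_neg_one] at h2
        linarith
      · have h2 : k * 1 ≤ k * X := mul_le_mul_of_nonneg_left (by omega) hk.le
        rw [mul_one] at h2
        linarith
    have hrr : ra = rb := by rw [h1, mul_zero] at hX; linarith
    refine ⟨hrr, Int.modEq_iff_dvd.mpr ⟨c, by linarith⟩⟩
  · rintro ⟨heq, h⟩
    obtain ⟨c, hc⟩ := Int.modEq_iff_dvd.mp h
    exact Int.modEq_iff_dvd.mpr ⟨c, by rw [heq]; linear_combination k * hc⟩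

private lemma castSub (m u v : ℕ) (c : ℤ) :
    ((u : ZMod m) - (v : ZMod m) = (c : ZMod m)) ↔ ((u:ℤ) - (v:ℤ) ≡ c [ZMOD (m:ℤ)]) := by
  rw [← ZMod.intCast_eq_intCast_iff]
  push_cast
  tauto

theorem stmt10 (n k : ℕ) (hn : 1 ≤ n) (hk : 1 ≤ k) (R S : Finset ℤ)
    (h : Nonempty (circulant n R ≃g circulant n S)) :
    Nonempty (circulant (k * n) (R.image (fun r => (k : ℤ) * r)) ≃g
      circulant (k * n) (S.image (fun r => (k : ℤ) * r))) := by
  obtain ⟨e⟩ := h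
  have hn0 : 0 < n := hn
  have hk0 : 0 < k := hk
  haveI : NeZero n := ⟨hn0.ne'⟩
  haveI : NeZero (k * n) := ⟨(Nat.mul_pos hk0 hn0).ne'⟩
  set q : ZMod (k*n) → ZMod n := fun x => ((x.val / k : ℕ) : ZMod n) with hqdef
  have hdivlt : ∀ x : ZMod (k*n), x.val / k < n := fun x =>
    Nat.div_lt_of_lt_mul x.val_lt
  have hqval : ∀ x : ZMod (k*n), (q x).val = x.val / k := fun x =>
    ZMod.val_natCast_of_lt (hdivlt x)
  have hvalm : ∀ x : ZMod (k*n), ((x.val : ℕ) : ZMod (k*n)) = x := fun x => by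
    simp [ZMod.natCast_val, ZMod.cast_id]
  have hvaln : ∀ y : ZMod n, ((y.val : ℕ) : ZMod n) = y := fun y => by
    simp [ZMod.natCast_val, ZMod.cast_id]
  have hsub : ∀ (a b : ZMod (k*n)) (c : ℤ), (a - b = (c : ZMod (k*n)))
      ↔ ((a.val : ℤ) - (b.val : ℤ) ≡ c [ZMOD ((k*n : ℕ) : ℤ)]) := by
    intro a b c
    rw [show a - b = (a.val : ZMod (k*n)) - (b.val : ZMod (k*n)) by rw [hvalm a, hvalm b]]
    exact castSub _ _ _ c
  -- master per-element lemma
  have hmaster : ∀ (a b : ZMod (k*n)) (t : ℤ),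
      (a - b = ((((k:ℤ)*t) : ℤ) : ZMod (k*n)) ∨ a - b = -((((k:ℤ)*t) : ℤ) : ZMod (k*n)))
      ↔ (a.val % k = b.val % k ∧
          (q a - q b = (t : ZMod n) ∨ q a - q b = -(t : ZMod n))) := by
    intro a b t
    have e1 : -(((k:ℤ)*t : ℤ) : ZMod (k*n)) = (((k:ℤ)*(-t) : ℤ) : ZMod (k*n)) := by
      push_cast; ring
    have e2 : -((t : ℤ) : ZMod n) = (((-t) : ℤ) : ZMod n) := by push_cast; ring
    have hdecA : (a.val : ℤ) = (k:ℤ) * ((a.val / k : ℕ) : ℤ) + ((a.val % k : ℕ) : ℤ) := by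
      exact_mod_cast (Nat.div_add_mod a.val k).symm
    have hdecB : (b.val : ℤ) = (k:ℤ) * ((b.val / k : ℕ) : ℤ) + ((b.val % k : ℕ) : ℤ) := by
      exact_mod_cast (Nat.div_add_mod b.val k).symm
    have hkZ : (0:ℤ) < (k:ℤ) := by exact_mod_cast hk0
    have hraB : ((a.val % k : ℕ) : ℤ) < (k:ℤ) := by exact_mod_cast Nat.mod_lt _ hk0
    have hrbB : ((b.val % k : ℕ) : ℤ) < (k:ℤ) := by exact_mod_cast Nat.mod_lt _ hk0
    have hqiff : ∀ c : ℤ, (q a - q b = (c : ZMod n)) ↔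
        ((a.val / k : ℕ):ℤ) - ((b.val / k : ℕ):ℤ) ≡ c [ZMOD ((n:ℕ):ℤ)] := fun c =>
      castSub n _ _ c
    rw [e1, e2, hsub a b _, hsub a b _, hqiff t, hqiff (-t)]
    rw [show ((k*n : ℕ) : ℤ) = (k:ℤ)*(n:ℤ) by push_cast; ring]
    rw [hdecA, hdecB,
      keyArith (n:ℤ) (k:ℤ) _ _ _ _ t hkZ (by positivity) hraB (by positivity) hrbB,
      keyArith (n:ℤ) (k:ℤ) _ _ _ _ (-t) hkZ (by positivity) hraB (by positivity) hrbB]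
    constructor
    · rintro (⟨hA, hP⟩ | ⟨hA, hQ⟩)
      · exact ⟨Nat.cast_inj.mp hA, Or.inl hP⟩
      · exact ⟨Nat.cast_inj.mp hA, Or.inr hQ⟩
    · rintro ⟨hA, hP | hQ⟩
      · exact Or.inl ⟨Nat.cast_inj.mpr hA, hP⟩
      · exact Or.inr ⟨Nat.cast_inj.mpr hA, hQ⟩
  have hval_eq : ∀ a b : ZMod (k*n), a.val / k = b.val / k → a.val % k = b.val % k → a = b := by
    intro a b h1 h2
    have h3 := Nat.div_add_mod a.val k
    have h4 := Nat.div_add_mod b.val k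
    rw [h1] at h3
    exact ZMod.val_injective _ (by omega)
  have hqeq : ∀ a b : ZMod (k*n), q a = q b → a.val / k = b.val / k := by
    intro a b hqq
    have := congrArg ZMod.val hqq
    rwa [hqval, hqval] at this
  -- graph-level characterization
  have hAdj : ∀ (T : Finset ℤ) (a b : ZMod (k*n)),
      (circulant (k*n) (T.image (fun r => (k:ℤ)*r))).Adj a b ↔
      (a.val % k = b.val % k ∧ (circulant n T).Adj (q a) (q b)) := by
    intro T a b
    constructor
    · rintro ⟨hab, s, hsmem, hs⟩
      obtain ⟨t, ht, rfl⟩ := Finset.mem_image.mp hsmem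
      obtain ⟨hmod, hor⟩ := (hmaster a b t).mp hs
      refine ⟨hmod, fun hqq => hab (hval_eq a b (hqeq a b hqq) hmod), t, ht, hor⟩
    · rintro ⟨hmod, hne, t, ht, hor⟩
      refine ⟨fun hab => hne (by rw [hab]), (k:ℤ)*t,
        Finset.mem_image.mpr ⟨t, ht, rfl⟩, (hmaster a b t).mpr ⟨hmod, hor⟩⟩
  -- the map
  set F : ZMod (k*n) → ZMod (k*n) :=
    fun x => ((k * (e (q x)).val + x.val % k : ℕ) : ZMod (k*n)) with hFdef
  have hFval : ∀ x, (F x).val = k * (e (q x)).val + x.val % k := by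
    intro x
    apply ZMod.val_natCast_of_lt
    have h1 : (e (q x)).val < n := ZMod.val_lt _
    have h2 : x.val % k < k := Nat.mod_lt _ hk0
    calc k * (e (q x)).val + x.val % k < k * ((e (q x)).val + 1) := by
            rw [mul_add, mul_one]; omega
      _ ≤ k * n := Nat.mul_le_mul_left k h1
  have hFmod : ∀ x, (F x).val % k = x.val % k := by
    intro x
    rw [hFval, Nat.mul_add_mod]
    exact Nat.mod_eq_of_lt (Nat.mod_lt _ hk0)
  have hFq : ∀ x, q (F x) = e (q x) := by
    intro x
    have hdiv : (F x).val / k = (e (q x)).val := by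
      rw [hFval, Nat.mul_add_div hk0, Nat.div_eq_of_lt (Nat.mod_lt _ hk0), Nat.add_zero]
    show (((F x).val / k : ℕ) : ZMod n) = e (q x)
    rw [hdiv, hvaln]
  have hFinj : Function.Injective F := by
    intro x y hxy
    have hqe : e (q x) = e (q y) := by
      have := congrArg q hxy
      rwa [hFq x, hFq y] at this
    have hq2 : q x = q y := e.toEquiv.injective hqe
    have hmod : x.val % k = y.val % k := by
      have hx := hFmod x
      have hy := hFmod y
      rw [hxy] at hx
      omega
    exact hval_eq x y (hqeq x y hq2) hmod
  have hFbij : Function.Bijective F := Finite.injective_iff_bijective.mp hFinj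
  refine ⟨⟨Equiv.ofBijective F hFbij, ?_⟩⟩
  intro a b
  show (circulant (k*n) (S.image (fun r => (k:ℤ)*r))).Adj (F a) (F b) ↔
    (circulant (k*n) (R.image (fun r => (k:ℤ)*r))).Adj a b
  rw [hAdj S, hAdj R, hFmod a, hFmod b, hFq a, hFq b, e.map_rel_iff]
end

section
/- There is no integer x with gcd(x, 81) = 1 such that the reflexive modular reduction of x·{1, 3, 26, 28} modulo 81 equals {3, 10, 17, 37}. -/
lemma reflRedSet_emod (n : ℕ) (x : ℤ) (R : Finset ℤ) :
    reflRedSet n x R = reflRedSet n (x % (n : ℤ)) R := by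
  unfold reflRedSet reflRed
  apply Finset.image_congr
  intro r _
  have : x * r % (n : ℤ) = x % (n : ℤ) * r % (n : ℤ) := by
    rw [Int.mul_emod, Int.mul_emod (x % (n:ℤ)) r, Int.emod_emod_of_dvd x dvd_rfl]
  simp [this]

theorem stmt12 :
    ¬ ∃ x : ℤ, Int.gcd x 81 = 1 ∧
      reflRedSet 81 x ({1, 3, 26, 28} : Finset ℤ) = {3, 10, 17, 37} := by
  rintro ⟨x, hg, hset⟩
  have h81 : (0:ℤ) < 81 := by norm_num
  have hlt : (x % 81).toNat < 81 := by
    have := Int.emod_lt_of_pos x h81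
    omega
  have hcast : ((x % 81).toNat : ℤ) = x % 81 :=
    Int.toNat_of_nonneg (Int.emod_nonneg x (by norm_num))
  have hcop : IsCoprime (x % 81) (81:ℤ) := by
    have h1 : IsCoprime x (81:ℤ) := Int.isCoprime_iff_gcd_eq_one.mpr hg
    have hx : x % 81 = x + 81 * (-(x / 81)) := by rw [Int.emod_def]; ring
    rw [hx]
    exact h1.add_mul_left_left _
  have hgcd : Int.gcd ((x % 81).toNat : ℤ) 81 = 1 := by
    rw [hcast]; exact Int.isCoprime_iff_gcd_eq_one.mp hcop
  have hset' : reflRedSet 81 ((x % 81).toNat : ℤ) ({1, 3, 26, 28} : Finset ℤ) = {3, 10, 17, 37} := by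
    rw [hcast]; exact (reflRedSet_emod 81 x _).symm.trans hset
  have key : ∀ s : Fin 81, ¬ (Int.gcd (s : ℤ) 81 = 1 ∧
      reflRedSet 81 (s : ℤ) ({1, 3, 26, 28} : Finset ℤ) = {3, 10, 17, 37}) := by decide
  exact key ⟨(x % 81).toNat, hlt⟩ ⟨hgcd, hset'⟩
end

section
/- There is no integer x with gcd(x, 96) = 1 such that the reflexive modular reduction of x·{1, 2, 47} modulo 96 equals {2, 23, 25}. -/
lemma auxKey : ∀ y ∈ Finset.Ico (0:ℤ) 96,
    ¬ (Int.gcd y 96 = 1 ∧ reflRedSet 96 y ({1, 2, 47} : Finset ℤ) = {2, 23, 25}) := by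
  decide

theorem stmt16 :
    ¬ ∃ x : ℤ, Int.gcd x 96 = 1 ∧
      reflRedSet 96 x ({1, 2, 47} : Finset ℤ) = {2, 23, 25} := by
  rintro ⟨x, hg, hset⟩
  have h96 : (0:ℤ) < 96 := by norm_num
  have hy : x % 96 ∈ Finset.Ico (0:ℤ) 96 := by
    simp [Finset.mem_Ico, Int.emod_nonneg x (by norm_num : (96:ℤ) ≠ 0),
      Int.emod_lt_of_pos x h96]
  have hgcd : Int.gcd (x % 96) 96 = 1 := by
    have hc : IsCoprime x (96:ℤ) := Int.isCoprime_iff_gcd_eq_one.mpr hg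
    have hc2 : IsCoprime (x % 96) (96:ℤ) := by
      have h : x % 96 = x + 96 * (-(x/96)) := by rw [Int.emod_def]; ring
      rw [h]
      exact hc.add_mul_left_left _
    exact Int.isCoprime_iff_gcd_eq_one.mp hc2
  have hmul : ∀ r : ℤ, reflRed 96 ((x % 96) * r) = reflRed 96 (x * r) := by
    intro r
    unfold reflRed
    have : ((x % 96) * r) % 96 = (x * r) % 96 := by
      rw [Int.mul_emod, Int.emod_emod_of_dvd x (dvd_refl 96), ← Int.mul_emod]
    simp only [Nat.cast_ofNat]
    rw [this]
  have hset' : reflRedSet 96 (x % 96) ({1, 2, 47} : Finset ℤ) = {2, 23, 25} := by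
    unfold reflRedSet
    rw [show (fun r => reflRed 96 ((x % 96) * r)) = (fun r => reflRed 96 (x * r)) from
      funext hmul]
    exact hset
  exact auxKey (x % 96) hy ⟨hgcd, hset'⟩
end

section
/- The orbit of {1, 2, 47} under S ↦ reflexive reduction of x·S modulo 96, as x ranges over integers coprime to 96, consists of exactly the eight sets {1,2,47}, {5,10,43}, {7,14,41}, {11,22,37}, {13,26,35}, {17,31,34}, {19,29,38}, {23,25,46}. -/
lemma reflRed_emod (x r : ℤ) : reflRed 96 (x * r) = reflRed 96 ((x % 96) * r) := by
  unfold reflRed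
  simp only [Nat.cast_ofNat]
  rw [Int.mul_emod x r, Int.mul_emod (x % 96) r, Int.emod_emod_of_dvd _ dvd_rfl]

lemma key : ∀ m : Fin 96, Nat.gcd m 96 = 1 →
    reflRedSet 96 (m : ℤ) {1, 2, 47} ∈
      ({({1, 2, 47} : Finset ℤ), {5, 10, 43}, {7, 14, 41}, {11, 22, 37}, {13, 26, 35},
        {17, 31, 34}, {19, 29, 38}, {23, 25, 46}} : Finset (Finset ℤ)) := by decide

theorem stmt17 :
    {S : Finset ℤ | ∃ x : ℤ, Int.gcd x 96 = 1 ∧ S = reflRedSet 96 x ({1, 2, 47} : Finset ℤ)} =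
      {({1, 2, 47} : Finset ℤ), {5, 10, 43}, {7, 14, 41}, {11, 22, 37}, {13, 26, 35},
        {17, 31, 34}, {19, 29, 38}, {23, 25, 46}} := by
  ext S
  simp only [Set.mem_setOf_eq, Set.mem_insert_iff, Set.mem_singleton_iff]
  constructor
  · rintro ⟨x, hx, rfl⟩
    have h0 : (0:ℤ) ≤ x % 96 := Int.emod_nonneg x (by norm_num)
    have h1 : x % 96 < 96 := Int.emod_lt_of_pos x (by norm_num)
    set m : Fin 96 := ⟨(x % 96).toNat, by omega⟩ with hm
    have hmx : (m : ℤ) = x % 96 := by simp [hm]; omega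
    have hset : reflRedSet 96 x {1, 2, 47} = reflRedSet 96 ((m : ℤ)) {1, 2, 47} := by
      unfold reflRedSet
      rw [hmx]
      apply Finset.image_congr
      intro r _
      exact reflRed_emod x r
    have hcop : IsCoprime (x % 96) (96:ℤ) := by
      have h : IsCoprime x (96:ℤ) := Int.isCoprime_iff_gcd_eq_one.mpr hx
      have h2 := h.add_mul_left_left (-(x / 96))
      have : x % 96 = x + 96 * -(x / 96) := by rw [Int.emod_def]; ring
      rwa [this]
    have hgcd : Nat.gcd (m : ℕ) 96 = 1 := by
      have h3 : Int.gcd (x % 96) 96 = 1 := Int.isCoprime_iff_gcd_eq_one.mp hcop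
      have h4 : (m : ℕ) = (x % 96).natAbs := by simp [hm]; omega
      rw [h4]
      simpa [Int.gcd] using h3
    have hk := key m hgcd
    rw [hset]
    simpa using hk
  · rintro (rfl | rfl | rfl | rfl | rfl | rfl | rfl | rfl)
    · exact ⟨1, by decide, by decide⟩
    · exact ⟨5, by decide, by decide⟩
    · exact ⟨7, by decide, by decide⟩
    · exact ⟨11, by decide, by decide⟩
    · exact ⟨13, by decide, by decide⟩
    · exact ⟨17, by decide, by decide⟩
    · exact ⟨19, by decide, by decide⟩
    · exact ⟨23, by decide, by decide⟩
end
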